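/- Let G be a simple connected graph on nodes {1,…,n}, let {y_{ij}} (for i = j or {i,j} an edge of G) be independent variables, let F be the field of fractions of the polynomial ring over ℝ in these variables, and let A(y) be the symmetric n×n matrix over F with A(y)_{ii} = y_{ii}, A(y)_{ij} = y_{ij} if {i,j} is an edge of G, and A(y)_{ij} = 0 otherwise. Then the characteristic polynomial of A(y) has n roots λ₁,…,λ_n in an algebraic closure of F, and these roots are linearly independent over ℚ. -/

import Mathlib

section Helpers
open Polynomial

/-- Powers `c, c^2, ..., c^n` of a transcendental element are `ℤ`-linearly independent. -/
lemma linearIndependent_pow_of_transcendental {c : ℂ} (hc : Transcendental ℤ c) (n : ℕ) :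
    LinearIndependent ℤ (fun i : Fin n => c ^ (i.1 + 1)) := by
  rw [Fintype.linearIndependent_iff]
  intro g hg
  set P : Polynomial ℤ := ∑ i : Fin n, Polynomial.C (g i) * Polynomial.X ^ (i.1 + 1) with hP
  have hPc : Polynomial.aeval c P = 0 := by
    rw [hP, map_sum]
    simpa [zsmul_eq_mul] using hg
  have hP0 : P = 0 := by
    by_contra h
    exact hc ⟨P, h, hPc⟩
  intro i
  have : P.coeff (i.1 + 1) = g i := by
    rw [hP, Polynomial.finset_sum_coeff]
    rw [Finset.sum_eq_single i]
    · simp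
    · intro j _ hj
      simp only [Polynomial.coeff_C_mul, Polynomial.coeff_X_pow]
      have : ¬ (i.1 + 1 = j.1 + 1) := by
        simp only [add_left_inj, Fin.val_inj]
        exact fun h => hj h.symm
      simp only [if_neg this, mul_zero]
    · simp
  rw [hP0] at this
  simpa using this.symm

lemma transcendental_complex_liouville :
    Transcendental ℤ ((liouvilleNumber 3 : ℝ) : ℂ) := by
  have hR : Transcendental ℤ (liouvilleNumber 3) :=
    transcendental_liouvilleNumber (by norm_num)
  intro h
  obtain ⟨P, hP0, hPc⟩ := h
  refine hR ⟨P, hP0, ?_⟩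
  have h2 := Polynomial.aeval_algHom_apply (Complex.ofRealHom.toIntAlgHom) (liouvilleNumber 3) P
  have h3 : ((Complex.ofRealHom.toIntAlgHom : ℝ →ₐ[ℤ] ℂ) (liouvilleNumber 3)) = ((liouvilleNumber 3 : ℝ) : ℂ) := rfl
  rw [h3, hPc] at h2
  exact Complex.ofReal_eq_zero.mp h2.symm


set_option maxHeartbeats 1000000 in
set_option synthInstance.maxHeartbeats 1000000 in
/-- Key transfer lemma: if a monic polynomial over `R` factors completely over a field
extension `K` of `R` with roots `lam`, and its image under a surjective specialization
`φ : R →+* ℝ` factors over `ℂ` with `ℤ`-linearly independent roots `a`, then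
`lam` is `ℤ`-linearly independent. -/
theorem key_transfer {n : ℕ} {R : Type*} [CommRing R] {K : Type*} [Field K] [Algebra R K]
    (hinj : Function.Injective (algebraMap R K))
    (φ : R →+* ℝ) (hφ : Function.Surjective φ)
    (p : R[X]) (hp : p.Monic)
    (lam : Fin n → K)
    (hfact : p.map (algebraMap R K) = ∏ i : Fin n, (X - C (lam i)))
    (a : Fin n → ℂ) (ha : LinearIndependent ℤ a)
    (hpa : p.map ((algebraMap ℝ ℂ).comp φ) = ∏ i : Fin n, (X - C (a i))) :
    LinearIndependent ℤ lam := by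
  classical
  set S := integralClosure R K with hS
  -- each lam i is integral over R
  have hint : ∀ i, lam i ∈ S := by
    intro i
    refine ⟨p, hp, ?_⟩
    have : (p.map (algebraMap R K)).eval (lam i) = 0 := by
      rw [hfact, eval_prod]
      refine Finset.prod_eq_zero (Finset.mem_univ i) ?_
      simp
    rwa [eval_map] at this
  set μ : Fin n → S := fun i => ⟨lam i, hint i⟩ with hμ
  -- the factorization holds already over S
  have hfactS : p.map (algebraMap R S) = ∏ i : Fin n, (X - C (μ i)) := by
    apply Polynomial.map_injective (algebraMap S K) (Subtype.val_injective)
    rw [Polynomial.map_map, ← IsScalarTower.algebraMap_eq, hfact, Polynomial.map_prod]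
    refine Finset.prod_congr rfl fun i _ => ?_
    rw [Polynomial.map_sub, map_X, map_C]
    rfl
  -- a maximal ideal of S lying over ker φ
  have hkermax : (RingHom.ker φ).IsMaximal := RingHom.ker_isMaximal_of_surjective φ hφ
  have hker_le : RingHom.ker (algebraMap R S) ≤ RingHom.ker φ := by
    intro x hx
    rw [RingHom.mem_ker] at hx ⊢
    have : algebraMap R K x = 0 := by
      rw [IsScalarTower.algebraMap_eq R S K, RingHom.comp_apply, hx, map_zero]
    have hx0 : x = 0 := hinj (by simpa using this)
    rw [hx0, map_zero]
  obtain ⟨q, hqmax, hqcomap⟩ :=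
    Ideal.exists_ideal_over_maximal_of_isIntegral (S := S) (RingHom.ker φ) hker_le
  haveI := hqmax
  letI : Field (S ⧸ q) := Ideal.Quotient.field q
  -- algebra ℝ → S⧸q
  have hle : RingHom.ker φ ≤ q.comap (algebraMap R S) := le_of_eq hqcomap.symm
  set ρ : (R ⧸ RingHom.ker φ) →+* (S ⧸ q) := Ideal.quotientMap q (algebraMap R S) hle with hρ
  set e : (R ⧸ RingHom.ker φ) ≃+* ℝ := RingHom.quotientKerEquivOfSurjective hφ with he
  letI : Algebra ℝ (S ⧸ q) := (ρ.comp e.symm.toRingHom).toAlgebra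
  have he_mk : ∀ r : R, e (Ideal.Quotient.mk (RingHom.ker φ) r) = φ r := fun r =>
    RingHom.kerLift_mk φ r
  have hcompat : ∀ r : R,
      algebraMap ℝ (S ⧸ q) (φ r) = Ideal.Quotient.mk q (algebraMap R S r) := by
    intro r
    have h1 : e.symm (φ r) = Ideal.Quotient.mk (RingHom.ker φ) r := by
      apply e.injective
      rw [RingEquiv.apply_symm_apply, he_mk]
    show ρ (e.symm (φ r)) = _
    rw [h1, hρ, Ideal.quotientMap_mk]
  -- S⧸q is algebraic over ℝ
  haveI : Algebra.IsAlgebraic ℝ (S ⧸ q) := by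
    constructor
    intro x
    obtain ⟨x', rfl⟩ := Ideal.Quotient.mk_surjective x
    obtain ⟨P, hPmonic, hPeval⟩ := integralClosure.isIntegral (R := R) (A := K) x'
    have : IsIntegral ℝ (Ideal.Quotient.mk q x') := by
      refine ⟨P.map φ, hPmonic.map φ, ?_⟩
      rw [eval₂_map]
      have hcomp : ((algebraMap ℝ (S ⧸ q)).comp φ) =
          (Ideal.Quotient.mk q).comp (algebraMap R S) := RingHom.ext fun r => hcompat r
      rw [hcomp, ← Polynomial.hom_eval₂, hPeval, map_zero]
    exact this.isAlgebraic
  haveI : Module.IsTorsionFree ℝ (S ⧸ q) :=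
    Module.isTorsionFree_iff_algebraMap_injective.mpr (algebraMap ℝ (S ⧸ q)).injective
  -- lift to ℂ
  let ψ₀ : (S ⧸ q) →ₐ[ℝ] ℂ := IsAlgClosed.lift
  set ψ : S →+* ℂ := ψ₀.toRingHom.comp (Ideal.Quotient.mk q) with hψdef
  have hψR : ∀ r : R, ψ (algebraMap R S r) = algebraMap ℝ ℂ (φ r) := by
    intro r
    show ψ₀ (Ideal.Quotient.mk q (algebraMap R S r)) = _
    rw [← hcompat r]
    exact ψ₀.commutes (φ r)
  -- transfer the factorization to ℂ
  set z : Fin n → ℂ := fun i => ψ (μ i) with hz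
  have hfactC : (∏ i : Fin n, (X - C (z i))) = ∏ i : Fin n, (X - C (a i)) := by
    have h1 : (p.map (algebraMap R S)).map ψ = p.map ((algebraMap ℝ ℂ).comp φ) := by
      rw [Polynomial.map_map]
      congr 1
      exact RingHom.ext fun r => hψR r
    rw [hpa] at h1
    rw [← h1, hfactS, Polynomial.map_prod]
    refine Finset.prod_congr rfl fun i _ => ?_
    rw [Polynomial.map_sub, map_X, map_C]
  -- multisets of roots agree
  have hmult : Multiset.map z Finset.univ.val = Multiset.map a Finset.univ.val := by
    have h1 := congrArg Polynomial.roots hfactC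
    have e1 : ∀ (w : Fin n → ℂ), Multiset.map (fun i => X - C (w i)) Finset.univ.val =
        Multiset.map (fun x => X - C x) (Multiset.map w Finset.univ.val) :=
      fun w => (Multiset.map_map (fun x => X - C x) w Finset.univ.val).symm
    rwa [Finset.prod_eq_multiset_prod, Finset.prod_eq_multiset_prod, e1 z, e1 a,
      roots_multiset_prod_X_sub_C, roots_multiset_prod_X_sub_C] at h1
  have hainj : Function.Injective a := ha.injective
  -- get the permutation
  have hex : ∀ i, ∃ j, a j = z i := by
    intro i
    have : z i ∈ Multiset.map a Finset.univ.val := by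
      rw [← hmult]
      exact Multiset.mem_map_of_mem z (Finset.mem_univ_val i)
    obtain ⟨j, _, hj⟩ := Multiset.mem_map.mp this
    exact ⟨j, hj⟩
  choose τ hτ using hex
  have hτuniv : Multiset.map τ Finset.univ.val = Finset.univ.val := by
    apply Multiset.map_injective hainj
    rw [Multiset.map_map]
    calc Multiset.map (a ∘ τ) Finset.univ.val
        = Multiset.map z Finset.univ.val := by
          refine Multiset.map_congr rfl fun i _ => hτ i
      _ = Multiset.map a Finset.univ.val := hmult
  have hτsurj : Function.Surjective τ := by
    intro j
    have : j ∈ Multiset.map τ Finset.univ.val := by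
      rw [hτuniv]; exact Finset.mem_univ_val j
    obtain ⟨i, _, hi⟩ := Multiset.mem_map.mp this
    exact ⟨i, hi⟩
  have hτbij : Function.Bijective τ := Finite.surjective_iff_bijective.mp hτsurj
  let σ : Fin n ≃ Fin n := Equiv.ofBijective τ hτbij
  -- conclude
  rw [Fintype.linearIndependent_iff]
  intro g hg
  have hSinj : Function.Injective (algebraMap S K) := Subtype.val_injective
  have h0 : (algebraMap S K) (∑ i : Fin n, g i • μ i) = 0 := by
    rw [map_sum]
    have hterm : ∀ i : Fin n, (algebraMap S K) (g i • μ i) = g i • lam i := fun i => by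
      rw [map_zsmul]; rfl
    rw [Finset.sum_congr rfl fun i _ => hterm i, hg]
  have hgS : (∑ i : Fin n, g i • μ i) = 0 := hSinj (by rw [h0, map_zero])
  have hgC : (∑ i : Fin n, g i • z i) = 0 := by
    have hh := congrArg ψ hgS
    rw [map_sum, map_zero] at hh
    have hterm : ∀ i : Fin n, ψ (g i • μ i) = g i • z i := fun i => map_zsmul ψ _ _
    rwa [Finset.sum_congr rfl fun i _ => hterm i] at hh
  have hgC' : (∑ i : Fin n, g i • a (σ i)) = 0 := by
    rw [← hgC]
    refine Finset.sum_congr rfl fun i _ => ?_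
    rw [show a (σ i) = z i from hτ i]
  have hgC'' : (∑ j : Fin n, g (σ.symm j) • a j) = 0 := by
    rw [← hgC']
    rw [← Equiv.sum_comp σ (fun j => g (σ.symm j) • a j)]
    simp
  have hall := Fintype.linearIndependent_iff.mp ha (fun j => g (σ.symm j)) hgC''
  intro i
  have := hall (σ i)
  simpa using this


lemma multiset_eq_map_of_card {α : Type*} {n : ℕ} (s : Multiset α) (h : Multiset.card s = n) :
    ∃ f : Fin n → α, Multiset.map f Finset.univ.val = s := by
  subst h
  refine ⟨fun i => s.toList.get (Fin.cast s.length_toList.symm i), ?_⟩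
  rw [Fin.univ_val_map, ← Multiset.coe_toList s]
  congr 1
  apply List.ext_get
  · simp
  · intro i h1 h2
    simp [List.get_ofFn]
    rfl

lemma charpoly_diagonal_fin {n : ℕ} {R : Type*} [CommRing R] (d : Fin n → R) :
    (Matrix.diagonal d).charpoly = ∏ i : Fin n, (X - C (d i)) := by
  have hc : Matrix.charmatrix (Matrix.diagonal d) =
      Matrix.diagonal (fun i => (X : R[X]) - C (d i)) := by
    ext i j
    by_cases h : i = j
    · subst h
      rw [Matrix.charmatrix_apply_eq, Matrix.diagonal_apply_eq, Matrix.diagonal_apply_eq]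
    · rw [Matrix.charmatrix_apply_ne _ _ _ h, Matrix.diagonal_apply_ne _ h,
        Matrix.diagonal_apply_ne _ h, map_zero, neg_zero]
  rw [Matrix.charpoly, hc, Matrix.det_diagonal]

end Helpers

open Matrix MvPolynomial

open scoped Classical in
/-- The generic element of the LSSM `L_G` attached to a graph `G`: the symmetric matrix over
the field of fractions `F` of the polynomial ring `ℝ[y_{ij} : i = j or {i,j} ∈ E(G)]`
whose `(i,j)` entry is the variable `y_{ij}` if `i = j` or `{i,j}` is an edge of `G`,
and `0` otherwise. -/
noncomputable def graphGenericMatrix {n : ℕ} (G : SimpleGraph (Fin n)) :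
    Matrix (Fin n) (Fin n)
      (FractionRing (MvPolynomial {s : Sym2 (Fin n) // s.IsDiag ∨ s ∈ G.edgeSet} ℝ)) :=
  Matrix.of fun i j =>
    if h : (s(i, j) : Sym2 (Fin n)).IsDiag ∨ s(i, j) ∈ G.edgeSet then
      algebraMap (MvPolynomial {s : Sym2 (Fin n) // s.IsDiag ∨ s ∈ G.edgeSet} ℝ)
        (FractionRing (MvPolynomial {s : Sym2 (Fin n) // s.IsDiag ∨ s ∈ G.edgeSet} ℝ))
        (MvPolynomial.X ⟨s(i, j), h⟩)
    else 0

set_option maxHeartbeats 1000000 in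
/-- For a simple connected graph `G`, the characteristic polynomial of the
generic element of `L_G` has `n` roots in an algebraic closure, and these roots are
`ℚ`-linearly independent. -/
theorem graph_lssm_eigenvalues_rat_linearIndependent
    (n : ℕ) (G : SimpleGraph (Fin n)) (hG : G.Connected) :
    ∃ lam : Fin n →
        AlgebraicClosure
          (FractionRing (MvPolynomial {s : Sym2 (Fin n) // s.IsDiag ∨ s ∈ G.edgeSet} ℝ)),
      ((graphGenericMatrix G).charpoly.map
            (algebraMap
              (FractionRing (MvPolynomial {s : Sym2 (Fin n) // s.IsDiag ∨ s ∈ G.edgeSet} ℝ))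
              (AlgebraicClosure
                (FractionRing
                  (MvPolynomial {s : Sym2 (Fin n) // s.IsDiag ∨ s ∈ G.edgeSet} ℝ))))).roots =
          Multiset.map lam Finset.univ.val ∧
        LinearIndependent ℚ lam := by
  classical
  set σv := {s : Sym2 (Fin n) // s.IsDiag ∨ s ∈ G.edgeSet} with hσv
  set R := MvPolynomial σv ℝ with hR
  set F := FractionRing R with hF
  set K := AlgebraicClosure F with hK
  -- the generic matrix over the polynomial ring
  set A : Matrix (Fin n) (Fin n) R := Matrix.of (fun i j =>
    if h : (s(i, j) : Sym2 (Fin n)).IsDiag ∨ s(i, j) ∈ G.edgeSet then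
      (MvPolynomial.X ⟨s(i, j), h⟩ : R) else 0) with hA
  have hmap : graphGenericMatrix G = A.map (algebraMap R F) := by
    ext i j
    show _ = algebraMap R F (A i j)
    rw [hA]
    by_cases h : (s(i, j) : Sym2 (Fin n)).IsDiag ∨ s(i, j) ∈ G.edgeSet
    · rw [graphGenericMatrix]
      show dite _ _ _ = _
      rw [dif_pos h]
      show _ = algebraMap R F (dite _ _ _)
      rw [dif_pos h]
    · rw [graphGenericMatrix]
      show dite _ _ _ = _
      rw [dif_neg h]
      show _ = algebraMap R F (dite _ _ _)
      rw [dif_neg h, map_zero]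
  set p := A.charpoly with hp
  have hmonic : p.Monic := A.charpoly_monic
  have hdeg : p.natDegree = n := by
    rw [hp, Matrix.charpoly_natDegree_eq_dim, Fintype.card_fin]
  set PK := p.map (algebraMap R K) with hPK
  have hcp : (graphGenericMatrix G).charpoly.map (algebraMap F K) = PK := by
    rw [hmap, Matrix.charpoly_map, Polynomial.map_map, ← IsScalarTower.algebraMap_eq]
  have hPKmonic : PK.Monic := hmonic.map _
  have hPKdeg : PK.natDegree = n := by rw [hPK, hmonic.natDegree_map, hdeg]
  have hcard : Multiset.card PK.roots = n := by
    rw [← hPKdeg]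
    exact Polynomial.splits_iff_card_roots.mp (IsAlgClosed.splits PK)
  obtain ⟨lam, hlam⟩ := multiset_eq_map_of_card PK.roots hcard
  refine ⟨lam, by rw [hcp]; exact hlam.symm, ?_⟩
  -- factorization over K
  have hfact : p.map (algebraMap R K) = ∏ i : Fin n, (Polynomial.X - Polynomial.C (lam i)) := by
    have h1 := Polynomial.prod_multiset_X_sub_C_of_monic_of_roots_card_eq hPKmonic
      (by rw [hcard, hPKdeg])
    rw [← hlam, Multiset.map_map] at h1
    rw [← hPK, ← h1, Finset.prod_eq_multiset_prod]
    rfl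
  -- the specialization
  set ξ : ℝ := liouvilleNumber 3 with hξ
  set a : Fin n → ℂ := fun i => ((ξ : ℂ)) ^ (i.1 + 1) with ha_def
  have ha : LinearIndependent ℤ a :=
    linearIndependent_pow_of_transcendental transcendental_complex_liouville n
  set tfun : Sym2 (Fin n) → ℝ := Sym2.lift ⟨fun i j => if i = j then ξ ^ (i.1 + 1) else 0,
    fun i j => by
      by_cases h : i = j
      · subst h; rfl
      · show (if i = j then ξ ^ (i.1 + 1) else 0) = (if j = i then ξ ^ (j.1 + 1) else 0)
        rw [if_neg h, if_neg fun hh => h hh.symm]⟩ with htfun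
  set φ : R →+* ℝ := (MvPolynomial.eval (fun v : σv => tfun v.1)) with hφ
  have hφsurj : Function.Surjective φ := fun r => ⟨MvPolynomial.C r, MvPolynomial.eval_C r⟩
  have hinj : Function.Injective (algebraMap R K) := by
    rw [IsScalarTower.algebraMap_eq R F K]
    exact (algebraMap F K).injective.comp (IsFractionRing.injective R F)
  have hAmap : A.map ((algebraMap ℝ ℂ).comp φ) = Matrix.diagonal a := by
    ext i j
    show (algebraMap ℝ ℂ) (φ (A i j)) = _
    by_cases hij : i = j
    · subst hij
      have hdiag : (s(i, i) : Sym2 (Fin n)).IsDiag ∨ s(i, i) ∈ G.edgeSet :=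
        Or.inl (Sym2.mk_isDiag_iff.mpr rfl)
      rw [hA]
      show (algebraMap ℝ ℂ) (φ (dite _ _ _)) = _
      rw [dif_pos hdiag, hφ, MvPolynomial.eval_X, Matrix.diagonal_apply_eq]
      show (algebraMap ℝ ℂ) (tfun s(i, i)) = a i
      rw [htfun]
      show (algebraMap ℝ ℂ) (if i = i then ξ ^ (i.1 + 1) else 0) = a i
      rw [if_pos rfl, ha_def]
      push_cast
      rfl
    · rw [Matrix.diagonal_apply_ne _ hij, hA]
      show (algebraMap ℝ ℂ) (φ (dite _ _ _)) = 0
      by_cases h : (s(i, j) : Sym2 (Fin n)).IsDiag ∨ s(i, j) ∈ G.edgeSet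
      · rw [dif_pos h, hφ, MvPolynomial.eval_X]
        show (algebraMap ℝ ℂ) (tfun s(i, j)) = 0
        rw [htfun]
        show (algebraMap ℝ ℂ) (if i = j then ξ ^ (i.1 + 1) else 0) = 0
        rw [if_neg hij, map_zero]
      · rw [dif_neg h, map_zero, map_zero]
  have hpa : p.map ((algebraMap ℝ ℂ).comp φ) = ∏ i : Fin n, (Polynomial.X - Polynomial.C (a i)) := by
    rw [hp, ← Matrix.charpoly_map, hAmap, charpoly_diagonal_fin]
  have hZ : LinearIndependent ℤ lam :=
    key_transfer hinj φ hφsurj p hmonic lam hfact a ha hpa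
  exact hZ.localization ℚ (nonZeroDivisors ℤ)
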